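/- (Pullback of the weak inverse-harmonicity pairing) Let Ω̂, Ω ⊂ ℝ² be bounded open sets, let x : Ω̂ → Ω be a C¹ diffeomorphism with det J(x)(ξ) > 0 for every ξ ∈ Ω̂, and let φ̂ : Ω → ℝ² be a C¹ map with compact support in Ω. Setting φ := φ̂ ∘ x, one has the change-of-variables identity ∫_Ω Σ_{i=1}^{2} ∇φ̂ᵢ(p) · ∇(x⁻¹)ᵢ(p) dp = ∫_{Ω̂} (∂_ξφ(ξ) : A(∂x)(ξ)) / det J(x)(ξ) dξ, where ∂_ξφ is the Jacobian matrix of φ with respect to ξ and M : N denotes the Frobenius inner product of 2×2 matrices. -/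

import Mathlib

open MeasureTheory Matrix

/-- The Jacobian matrix of a map `x : ℝ² → ℝ²` at a point. -/
noncomputable def jacMat (x : (Fin 2 → ℝ) → (Fin 2 → ℝ)) (ξ : Fin 2 → ℝ) :
    Matrix (Fin 2) (Fin 2) ℝ :=
  Matrix.of fun i j => fderiv ℝ (fun q => x q i) ξ (Pi.single j 1)

/-- The gradient of the `i`-th component of a map `ℝ² → ℝ²` at a point. -/
noncomputable def gradComp (φ : (Fin 2 → ℝ) → (Fin 2 → ℝ)) (i : Fin 2) (p : Fin 2 → ℝ) :
    Fin 2 → ℝ :=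
  fun a => fderiv ℝ (fun q => φ q i) p (Pi.single a 1)

/-- The matrix `A(J) = [[g₂₂, −g₁₂], [−g₁₂, g₁₁]]` built from the metric tensor `G = JᵀJ`. -/
def Amat (J : Matrix (Fin 2) (Fin 2) ℝ) : Matrix (Fin 2) (Fin 2) ℝ :=
  !![(Jᵀ * J) 1 1, -((Jᵀ * J) 0 1); -((Jᵀ * J) 0 1), (Jᵀ * J) 0 0]

/-- The Frobenius inner product of two `2×2` matrices. -/
def frobInner (M N : Matrix (Fin 2) (Fin 2) ℝ) : ℝ :=
  ∑ i, ∑ j, M i j * N i j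

lemma fderiv_comp_proj {x : (Fin 2 → ℝ) → (Fin 2 → ℝ)} {ξ : Fin 2 → ℝ}
    (hd : DifferentiableAt ℝ x ξ) (i : Fin 2) (v : Fin 2 → ℝ) :
    fderiv ℝ (fun q => x q i) ξ v = fderiv ℝ x ξ v i := by
  have h : HasFDerivAt (fun q => x q i)
      (((ContinuousLinearMap.proj i : (Fin 2 → ℝ) →L[ℝ] ℝ)).comp (fderiv ℝ x ξ)) ξ := by
    exact ((ContinuousLinearMap.proj i :
      (Fin 2 → ℝ) →L[ℝ] ℝ).hasFDerivAt).comp ξ hd.hasFDerivAt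
  rw [h.fderiv]; rfl

lemma clm_apply_eq_sum (L : (Fin 2 → ℝ) →L[ℝ] (Fin 2 → ℝ)) (v : Fin 2 → ℝ) (i : Fin 2) :
    L v i = ∑ k, v k * L (Pi.single k 1) i := by
  have hv : v = ∑ k, v k • (Pi.single k 1 : Fin 2 → ℝ) := by
    funext j
    rw [Finset.sum_apply]
    simp [Pi.single_apply]
  conv_lhs => rw [hv]
  rw [map_sum]
  simp [Finset.sum_apply]

lemma jacMat_eq_toMatrix {x : (Fin 2 → ℝ) → (Fin 2 → ℝ)} {ξ : Fin 2 → ℝ}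
    (hd : DifferentiableAt ℝ x ξ) :
    jacMat x ξ = LinearMap.toMatrix (Pi.basisFun ℝ (Fin 2)) (Pi.basisFun ℝ (Fin 2))
      (fderiv ℝ x ξ : (Fin 2 → ℝ) →ₗ[ℝ] (Fin 2 → ℝ)) := by
  ext i j
  rw [LinearMap.toMatrix_apply]
  simp [jacMat, fderiv_comp_proj hd]

lemma jacMat_det_eq {x : (Fin 2 → ℝ) → (Fin 2 → ℝ)} {ξ : Fin 2 → ℝ}
    (hd : DifferentiableAt ℝ x ξ) :
    (jacMat x ξ).det = (fderiv ℝ x ξ).det := by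
  rw [jacMat_eq_toMatrix hd, ContinuousLinearMap.det, LinearMap.det_toMatrix]

lemma jacMat_comp {φ x : (Fin 2 → ℝ) → (Fin 2 → ℝ)} {ξ : Fin 2 → ℝ}
    (hφ : DifferentiableAt ℝ φ (x ξ)) (hx : DifferentiableAt ℝ x ξ) :
    jacMat (fun q => φ (x q)) ξ = jacMat φ (x ξ) * jacMat x ξ := by
  ext i j
  have hc : DifferentiableAt ℝ (fun q => φ (x q)) ξ := hφ.comp ξ hx
  have hcf : fderiv ℝ (fun q => φ (x q)) ξ = (fderiv ℝ φ (x ξ)).comp (fderiv ℝ x ξ) :=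
    (hφ.hasFDerivAt.comp ξ hx.hasFDerivAt).fderiv
  rw [Matrix.mul_apply]
  show fderiv ℝ (fun q => (fun q => φ (x q)) q i) ξ (Pi.single j 1) = _
  rw [fderiv_comp_proj hc, hcf]
  simp only [ContinuousLinearMap.comp_apply]
  rw [clm_apply_eq_sum (fderiv ℝ φ (x ξ))]
  congr 1; funext k
  simp [jacMat, fderiv_comp_proj hφ, fderiv_comp_proj hx, mul_comm]

lemma frob_amat (P J Q : Matrix (Fin 2) (Fin 2) ℝ) (hd : J.det ≠ 0) (h : Q * J = 1) :
    frobInner (P * J) (Amat J) = J.det ^ 2 * frobInner P Q := by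
  have hQ : Q = J⁻¹ := (Matrix.inv_eq_left_inv h).symm
  subst hQ
  rw [Matrix.inv_def, Matrix.adjugate_fin_two, Ring.inverse_eq_inv']
  simp only [frobInner, Amat, Matrix.mul_apply, Matrix.transpose_apply,
    Fin.sum_univ_two, Matrix.smul_apply, Matrix.of_apply, Matrix.cons_val',
    Matrix.cons_val_zero, Matrix.cons_val_one, Matrix.head_cons, Matrix.head_fin_const,
    Matrix.empty_val', Matrix.cons_val_fin_one, smul_eq_mul, Matrix.det_fin_two]
  have hd' : J 0 0 * J 1 1 - J 0 1 * J 1 0 ≠ 0 := by rwa [Matrix.det_fin_two] at hd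
  field_simp
  ring

/-- **Pullback of the weak inverse-harmonicity pairing.** For an orientation-preserving C¹
diffeomorphism `x : Ω̂ → Ω` and a C¹ test map `φ̂` compactly supported in `Ω`, the Dirichlet
pairing of `φ̂` with the inverse map equals the pulled-back integral
`∫_{Ω̂} (∂_ξ(φ̂∘x) : A(∂x)) / det J dξ`. -/
theorem weak_inverse_harmonicity_pullback
    (Ωhat Ω : Set (Fin 2 → ℝ))
    (hΩhat_open : IsOpen Ωhat) (hΩ_open : IsOpen Ω)
    (hΩhat_bdd : Bornology.IsBounded Ωhat) (hΩ_bdd : Bornology.IsBounded Ω)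
    (x y : (Fin 2 → ℝ) → (Fin 2 → ℝ))
    (hx : ContDiffOn ℝ 1 x Ωhat) (hy : ContDiffOn ℝ 1 y Ω)
    (hbij : Set.BijOn x Ωhat Ω)
    (hinv_left : ∀ ξ ∈ Ωhat, y (x ξ) = ξ) (hinv_right : ∀ p ∈ Ω, x (y p) = p)
    (hdet : ∀ ξ ∈ Ωhat, 0 < (jacMat x ξ).det)
    (φhat : (Fin 2 → ℝ) → (Fin 2 → ℝ))
    (hφhat : ContDiff ℝ 1 φhat)
    (hφhat_cpt : HasCompactSupport φhat) (hφhat_supp : tsupport φhat ⊆ Ω) :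
    (∫ p in Ω, ∑ i : Fin 2, gradComp φhat i p ⬝ᵥ gradComp y i p)
      = ∫ ξ in Ωhat,
          frobInner (jacMat (fun q => φhat (x q)) ξ) (Amat (jacMat x ξ))
            / (jacMat x ξ).det := by
  have hdiffx : ∀ ξ ∈ Ωhat, DifferentiableAt ℝ x ξ := fun ξ h =>
    (hx.contDiffAt (hΩhat_open.mem_nhds h)).differentiableAt one_ne_zero
  have hdiffy : ∀ p ∈ Ω, DifferentiableAt ℝ y p := fun p h =>
    (hy.contDiffAt (hΩ_open.mem_nhds h)).differentiableAt one_ne_zero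
  have hxim : x '' Ωhat = Ω := hbij.image_eq
  rw [← hxim,
    integral_image_eq_integral_abs_det_fderiv_smul volume hΩhat_open.measurableSet
      (fun ξ hξ => ((hdiffx ξ hξ).hasFDerivAt).hasFDerivWithinAt) hbij.injOn]
  apply setIntegral_congr_fun hΩhat_open.measurableSet
  intro ξ hξ
  have hp : x ξ ∈ Ω := hbij.mapsTo hξ
  have hdx := hdiffx ξ hξ
  have hdy := hdiffy (x ξ) hp
  have hdφ : DifferentiableAt ℝ φhat (x ξ) := (hφhat.differentiable one_ne_zero) (x ξ)
  have hdetpos := hdet ξ hξ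
  have hdetne : (jacMat x ξ).det ≠ 0 := ne_of_gt hdetpos
  -- jacMat of y∘x is the identity
  have hid : jacMat y (x ξ) * jacMat x ξ = 1 := by
    rw [← jacMat_comp hdy hdx]
    ext i j
    have hev : (fun q => y (x q) i) =ᶠ[nhds ξ] (fun q => q i) := by
      filter_upwards [hΩhat_open.mem_nhds hξ] with q hq
      rw [hinv_left q hq]
    have hlin : fderiv ℝ (fun q : Fin 2 → ℝ => q i) ξ =
        (ContinuousLinearMap.proj i : (Fin 2 → ℝ) →L[ℝ] ℝ) :=
      (ContinuousLinearMap.proj i : (Fin 2 → ℝ) →L[ℝ] ℝ).fderiv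
    show fderiv ℝ (fun q => (fun q => y (x q)) q i) ξ (Pi.single j 1) = (1 : Matrix _ _ ℝ) i j
    rw [show (fun q => (fun q => y (x q)) q i) = fun q => y (x q) i from rfl,
      hev.fderiv_eq, hlin]
    simp [Matrix.one_apply, Pi.single_apply, eq_comm]
  have hchain : jacMat (fun q => φhat (x q)) ξ = jacMat φhat (x ξ) * jacMat x ξ :=
    jacMat_comp hdφ hdx
  have hfr := frob_amat (jacMat φhat (x ξ)) (jacMat x ξ) (jacMat y (x ξ)) hdetne hid
  have hsum : (∑ i : Fin 2, gradComp φhat i (x ξ) ⬝ᵥ gradComp y i (x ξ))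
      = frobInner (jacMat φhat (x ξ)) (jacMat y (x ξ)) := by
    simp [frobInner, jacMat, gradComp, dotProduct]
  have habs : |(fderiv ℝ x ξ).det| = (jacMat x ξ).det := by
    rw [← jacMat_det_eq hdx]; exact abs_of_pos hdetpos
  simp only []
  rw [smul_eq_mul, habs, hsum, hchain, hfr]
  field_simp
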